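/- Let Z and M be mutually inverse d×d matrices and f, g column vectors of length d with γ := gᵀMf ≠ 0. Define the (2d+1)×(2d+1) block matrices Z̄ = [[Z, f, Z], [gᵀ, 0, gᵀ], [0, f, Z]] and M̄ = [[M, 0, −M], [γ⁻¹gᵀM, −γ⁻¹, 0], [−γ⁻¹Mfgᵀ M, γ⁻¹Mf, M]], and vectors f̄ = (f; 0; 0), ḡ = (0; 0; g). Then Z̄ and M̄ are mutually inverse and ḡᵀM̄f̄ = −γ ≠ 0. -/

import Mathlib

open Matrix

private lemma factL {K : Type*} [CommRing K] {d : ℕ} (t w : Fin d → K) (c : K) :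
    ∑ x, (c * t x) * w x = c * ∑ x, t x * w x := by
  rw [Finset.mul_sum]; exact Finset.sum_congr rfl fun x _ => by ring

private lemma factR {K : Type*} [CommRing K] {d : ℕ} (t w : Fin d → K) (c : K) :
    ∑ x, w x * (c * t x) = c * ∑ x, w x * t x := by
  rw [Finset.mul_sum]; exact Finset.sum_congr rfl fun x _ => by ring

private lemma factR2 {K : Type*} [CommRing K] {d : ℕ} (t w : Fin d → K) (c e : K) :
    ∑ x, w x * (c * t x * e) = (c * e) * ∑ x, w x * t x := by
  rw [Finset.mul_sum]; exact Finset.sum_congr rfl fun x _ => by ring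

/-- The inductive block-matrix claim: if `Z` and `M` are mutually inverse and
`γ = gᵀ M f ≠ 0`, then the displayed `(2d+1) × (2d+1)` block matrices `Z̄` and `M̄`
are mutually inverse and `ḡᵀ M̄ f̄ = -γ ≠ 0`. -/
theorem stmt14 {K : Type*} [Field K] (d : ℕ)
    (Z M : Matrix (Fin d) (Fin d) K) (f g : Fin d → K)
    (hZM : Z * M = 1) (hMZ : M * Z = 1)
    (γ : K) (hγ : γ = g ⬝ᵥ (M *ᵥ f)) (hγ0 : γ ≠ 0)
    (Zbar Mbar : Matrix (Fin d ⊕ Unit ⊕ Fin d) (Fin d ⊕ Unit ⊕ Fin d) K)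
    (fbar gbar : Fin d ⊕ Unit ⊕ Fin d → K)
    (hZbar : Zbar = fun i j =>
      match i, j with
      | .inl a, .inl b => Z a b
      | .inl a, .inr (.inl _) => f a
      | .inl a, .inr (.inr b) => Z a b
      | .inr (.inl _), .inl b => g b
      | .inr (.inl _), .inr (.inl _) => 0
      | .inr (.inl _), .inr (.inr b) => g b
      | .inr (.inr _), .inl _ => 0
      | .inr (.inr a), .inr (.inl _) => f a
      | .inr (.inr a), .inr (.inr b) => Z a b)
    (hMbar : Mbar = fun i j =>
      match i, j with
      | .inl a, .inl b => M a b
      | .inl _, .inr (.inl _) => 0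
      | .inl a, .inr (.inr b) => -M a b
      | .inr (.inl _), .inl b => γ⁻¹ * (g ᵥ* M) b
      | .inr (.inl _), .inr (.inl _) => -γ⁻¹
      | .inr (.inl _), .inr (.inr _) => 0
      | .inr (.inr a), .inl b => -γ⁻¹ * (M *ᵥ f) a * (g ᵥ* M) b
      | .inr (.inr a), .inr (.inl _) => γ⁻¹ * (M *ᵥ f) a
      | .inr (.inr a), .inr (.inr b) => M a b)
    (hfbar : fbar = fun i => match i with
      | .inl a => f a
      | .inr _ => 0)
    (hgbar : gbar = fun i => match i with
      | .inr (.inr a) => g a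
      | _ => 0) :
    Zbar * Mbar = 1 ∧ Mbar * Zbar = 1 ∧
    gbar ⬝ᵥ (Mbar *ᵥ fbar) = -γ ∧ gbar ⬝ᵥ (Mbar *ᵥ fbar) ≠ 0 := by
  subst hZbar hMbar hfbar hgbar
  have hZu : ∀ a, ∑ x, Z a x * (M *ᵥ f) x = f a := by
    intro a
    have h : Z *ᵥ (M *ᵥ f) = f := by
      rw [Matrix.mulVec_mulVec, hZM, Matrix.one_mulVec]
    simpa [Matrix.mulVec, dotProduct] using congrFun h a
  have hvZ : ∀ b, ∑ x, (g ᵥ* M) x * Z x b = g b := by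
    intro b
    have h : (g ᵥ* M) ᵥ* Z = g := by
      rw [Matrix.vecMul_vecMul, hMZ, Matrix.vecMul_one]
    simpa [Matrix.vecMul, dotProduct] using congrFun h b
  have hgu : ∑ x, g x * (M *ᵥ f) x = γ := by
    rw [hγ]; rfl
  have hvf : ∑ x, (g ᵥ* M) x * f x = γ := by
    rw [hγ, Matrix.dotProduct_mulVec]; rfl
  have hZM' : ∀ a b, ∑ x, Z a x * M x b = if a = b then 1 else 0 := by
    intro a b
    simpa [Matrix.mul_apply, Matrix.one_apply] using congrFun (congrFun hZM a) b
  have hMZ' : ∀ a b, ∑ x, M a x * Z x b = if a = b then 1 else 0 := by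
    intro a b
    simpa [Matrix.mul_apply, Matrix.one_apply] using congrFun (congrFun hMZ a) b
  have hMf : ∀ a, ∑ x, M a x * f x = (M *ᵥ f) a := fun a => rfl
  have hgM : ∀ b, ∑ x, g x * M x b = (g ᵥ* M) b := by
    intro b; simp [Matrix.vecMul, dotProduct]
  have hγγ : γ⁻¹ * γ = 1 := inv_mul_cancel₀ hγ0
  refine ⟨?_, ?_, ?_, ?_⟩
  · ext i j
    erw [Matrix.mul_apply]
    rcases i with a | _ | a <;> rcases j with b | _ | b <;>
      simp only [Matrix.mul_apply, Matrix.one_apply, Fintype.sum_sum_type,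
        Finset.univ_unique, Finset.sum_singleton] <;>
      simp only [factL, factR, factR2, mul_zero, zero_mul, mul_neg, neg_mul,
        Finset.sum_const_zero, Finset.sum_neg_distrib] <;>
      simp only [hZu, hvZ, hgu, hvf, hMf, hgM, hZM', hMZ'] <;>
      simp only [Sum.inl.injEq, Sum.inr.injEq, reduceCtorEq, if_false, if_true] <;>
      (try split_ifs) <;> (try field_simp) <;> (try ring)
  · ext i j
    erw [Matrix.mul_apply]
    rcases i with a | _ | a <;> rcases j with b | _ | b <;>
      simp only [Matrix.mul_apply, Matrix.one_apply, Fintype.sum_sum_type,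
        Finset.univ_unique, Finset.sum_singleton] <;>
      simp only [factL, factR, factR2, mul_zero, zero_mul, mul_neg, neg_mul,
        Finset.sum_const_zero, Finset.sum_neg_distrib] <;>
      simp only [hZu, hvZ, hgu, hvf, hMf, hgM, hZM', hMZ'] <;>
      simp only [Sum.inl.injEq, Sum.inr.injEq, reduceCtorEq, if_false, if_true] <;>
      (try split_ifs) <;> (try field_simp) <;> (try ring)
  · simp only [dotProduct, Matrix.mulVec, Fintype.sum_sum_type,
      Finset.univ_unique, Finset.sum_singleton]
    simp only [factL, factR, factR2, mul_zero, zero_mul, mul_neg, neg_mul,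
      Finset.sum_const_zero, Finset.sum_neg_distrib]
    erw [hvf]
    simp only [hvf, hgu, hMf, hgM, add_zero, zero_add]
    rw [show (fun x => g x * -(γ⁻¹ * (M *ᵥ f) x * γ)) = fun x => -((γ⁻¹ * γ) * (g x * (M *ᵥ f) x)) from funext fun x => by ring]
    simp only [hγγ, one_mul, Finset.sum_neg_distrib, hgu]
  · simp only [dotProduct, Matrix.mulVec, Fintype.sum_sum_type,
      Finset.univ_unique, Finset.sum_singleton]
    simp only [factL, factR, factR2, mul_zero, zero_mul, mul_neg, neg_mul,
      Finset.sum_const_zero, Finset.sum_neg_distrib]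
    erw [hvf]
    simp only [hvf, hgu, hMf, hgM, add_zero, zero_add]
    rw [show (fun x => g x * -(γ⁻¹ * (M *ᵥ f) x * γ)) = fun x => -((γ⁻¹ * γ) * (g x * (M *ᵥ f) x)) from funext fun x => by ring]
    simp only [hγγ, one_mul, Finset.sum_neg_distrib, hgu]
    simpa using hγ0
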